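/- In a decomposable and smooth arithmetic circuit AC(X), for every full instantiation x of the variables X, AC(x) equals the sum of the coefficients of all x-subcircuits (complete subcircuits whose term is x). -/

import Mathlib

/-- An arithmetic circuit over variables `ι` with values `α`: leaves are indicator
variables `λ_{i,v}` or real parameters; internal nodes are sums or products. -/
inductive AC (ι α : Type) : Type where
  | ind (i : ι) (v : α)
  | param (θ : ℝ)
  | sum (l r : AC ι α)
  | prod (l r : AC ι α)

namespace AC

variable {ι α : Type} [Fintype ι] [DecidableEq ι] [Fintype α] [DecidableEq α]

/-- Evaluate the circuit under a circuit input `Λ` assigning 0/1 to each indicator. -/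
def eval (Λ : ι → α → Bool) : AC ι α → ℝ
  | ind i v => if Λ i v then 1 else 0
  | param θ => θ
  | sum l r => l.eval Λ + r.eval Λ
  | prod l r => l.eval Λ * r.eval Λ

/-- Evaluate the maximizer circuit (sum nodes replaced by max nodes). -/
def evalMax (Λ : ι → α → Bool) : AC ι α → ℝ
  | ind i v => if Λ i v then 1 else 0
  | param θ => θ
  | sum l r => max (l.evalMax Λ) (r.evalMax Λ)
  | prod l r => l.evalMax Λ * r.evalMax Λ

/-- The circuit input corresponding to a full instantiation `x`. -/
def inputOf (x : ι → α) : ι → α → Bool := fun i v => decide (x i = v)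

/-- The circuit input corresponding to a partial instantiation `y`:
an indicator is set to 1 iff its value is compatible with `y`. -/
def pinputOf (y : ι → Option α) : ι → α → Bool := fun i v =>
  match y i with
  | none => true
  | some w => decide (w = v)

/-- The value `AC(x)` of the circuit at a full instantiation `x`. -/
def evalAt (x : ι → α) (c : AC ι α) : ℝ := c.eval (inputOf x)

/-- The value `AC(y)` of the circuit at a partial instantiation `y`. -/
def evalP (y : ι → Option α) (c : AC ι α) : ℝ := c.eval (pinputOf y)

/-- Maximizer-circuit value at a full instantiation. -/
def evalMaxAt (x : ι → α) (c : AC ι α) : ℝ := c.evalMax (inputOf x)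

/-- Maximizer-circuit value at a partial instantiation. -/
def evalMaxP (y : ι → Option α) (c : AC ι α) : ℝ := c.evalMax (pinputOf y)

/-- `vars n`: variables with some indicator at or under the node. -/
def vars : AC ι α → Finset ι
  | ind i _ => {i}
  | param _ => ∅
  | sum l r => l.vars ∪ r.vars
  | prod l r => l.vars ∪ r.vars

/-- The multiset of parameters appearing in the circuit. -/
def params : AC ι α → Multiset ℝ
  | ind _ _ => 0
  | param θ => {θ}
  | sum l r => l.params + r.params
  | prod l r => l.params + r.params

/-- Decomposability: children of every `*`-node have disjoint variable sets. -/
def Decomposable : AC ι α → Prop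
  | ind _ _ => True
  | param _ => True
  | sum l r => l.Decomposable ∧ r.Decomposable
  | prod l r => Disjoint l.vars r.vars ∧ l.Decomposable ∧ r.Decomposable

/-- Smoothness: every child of a `+`-node mentions the same variables as the node. -/
def Smooth : AC ι α → Prop
  | ind _ _ => True
  | param _ => True
  | sum l r => l.vars = r.vars ∧ l.Smooth ∧ r.Smooth
  | prod l r => l.Smooth ∧ r.Smooth

/-- Determinism: under every full instantiation, every `+`-node has at most one
non-zero input. -/
def Deterministic : AC ι α → Prop
  | ind _ _ => True
  | param _ => True
  | sum l r => (∀ x : ι → α, l.evalAt x = 0 ∨ r.evalAt x = 0) ∧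
      l.Deterministic ∧ r.Deterministic
  | prod l r => l.Deterministic ∧ r.Deterministic

/-- A full instantiation `x` is compatible with a partial instantiation `y`. -/
def Compat (x : ι → α) (y : ι → Option α) : Prop :=
  ∀ i, y i = none ∨ y i = some (x i)

instance (x : ι → α) (y : ι → Option α) : Decidable (Compat x y) := by
  unfold Compat; infer_instance

/-- The graph of a full instantiation, i.e. its term `{(i, x i) | i}`. -/
def graphOf (x : ι → α) : Finset (ι × α) := Finset.univ.image fun i => (i, x i)

/-- The marginal `Σ_{x ∼ y} f(x)` of a factor `f` at a partial instantiation `y`. -/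
def margSum (f : (ι → α) → ℝ) (y : ι → Option α) : ℝ :=
  ∑ x : ι → α, if Compat x y then f x else 0

/-- The circuit computes the factor `f`. -/
def Computes (c : AC ι α) (f : (ι → α) → ℝ) : Prop := ∀ x, c.evalAt x = f x

/-- The circuit computes the marginals of the factor `f`. -/
def ComputesMarginals (c : AC ι α) (f : (ι → α) → ℝ) : Prop :=
  ∀ y : ι → Option α, c.evalP y = margSum f y

/-- The multiset of (term, coefficient) pairs of all complete subcircuits. -/
def subs : AC ι α → Multiset (Finset (ι × α) × ℝ)
  | ind i v => {({(i, v)}, 1)}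
  | param θ => {(∅, θ)}
  | sum l r => l.subs + r.subs
  | prod l r => l.subs.bind fun a => r.subs.map fun b => (a.1 ∪ b.1, a.2 * b.2)

/-- Complete subcircuits of a circuit: choose one child of each `+`-node and all
children of each `*`-node. -/
inductive Sub : AC ι α → Type where
  | ind (i : ι) (v : α) : Sub (AC.ind i v)
  | param (θ : ℝ) : Sub (AC.param θ)
  | sumL {l r : AC ι α} : Sub l → Sub (AC.sum l r)
  | sumR {l r : AC ι α} : Sub r → Sub (AC.sum l r)
  | prod {l r : AC ι α} : Sub l → Sub r → Sub (AC.prod l r)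

/-- The term of a complete subcircuit: the set of indicator values appearing in it. -/
def Sub.term : {c : AC ι α} → Sub c → Finset (ι × α)
  | _, .ind i v => {(i, v)}
  | _, .param _ => ∅
  | _, .sumL s => s.term
  | _, .sumR s => s.term
  | _, .prod s t => s.term ∪ t.term

/-- The coefficient of a complete subcircuit: the product of its parameters. -/
def Sub.coeff : {c : AC ι α} → Sub c → ℝ
  | _, .ind _ _ => 1
  | _, .param θ => θ
  | _, .sumL s => s.coeff
  | _, .sumR s => s.coeff
  | _, .prod s t => s.coeff * t.coeff


end AC


namespace AC
variable {ι α : Type} [Fintype ι] [DecidableEq ι] [Fintype α] [DecidableEq α]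

lemma fst_mem_vars : ∀ (c : AC ι α) (p : Finset (ι × α) × ℝ), p ∈ c.subs →
    ∀ q ∈ p.1, q.1 ∈ c.vars := by
  intro c
  induction c with
  | ind i v =>
      intro p hp q hq
      simp only [subs, Multiset.mem_singleton] at hp
      subst hp
      simp only [Finset.mem_singleton] at hq
      subst hq
      simp [vars]
  | param θ =>
      intro p hp q hq
      simp only [subs, Multiset.mem_singleton] at hp
      subst hp
      simp at hq
  | sum l r ihl ihr =>
      intro p hp q hq
      simp only [subs, Multiset.mem_add] at hp
      rcases hp with hp | hp
      · exact Finset.mem_union_left _ (ihl p hp q hq)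
      · exact Finset.mem_union_right _ (ihr p hp q hq)
  | prod l r ihl ihr =>
      intro p hp q hq
      simp only [subs, Multiset.mem_bind, Multiset.mem_map] at hp
      obtain ⟨a, ha, b, hb, rfl⟩ := hp
      simp only [Finset.mem_union] at hq
      rcases hq with hq | hq
      · exact Finset.mem_union_left _ (ihl a ha q hq)
      · exact Finset.mem_union_right _ (ihr b hb q hq)

lemma union_eq_iff (x : ι → α) (s t : Finset ι) (hst : Disjoint s t)
    (a1 b1 : Finset (ι × α)) (ha : ∀ q ∈ a1, q.1 ∈ s) (hb : ∀ q ∈ b1, q.1 ∈ t) :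
    (a1 ∪ b1 = s.image (fun i => (i, x i)) ∪ t.image (fun i => (i, x i))) ↔
      (a1 = s.image (fun i => (i, x i)) ∧ b1 = t.image (fun i => (i, x i))) := by
  constructor
  · intro h
    have hdisj : ∀ q : ι × α, q.1 ∈ s → q.1 ∈ t → False := fun q h1 h2 =>
      Finset.disjoint_left.mp hst h1 h2
    constructor
    · ext q
      constructor
      · intro hq
        have : q ∈ a1 ∪ b1 := Finset.mem_union_left _ hq
        rw [h, Finset.mem_union] at this
        rcases this with h' | h'
        · exact h'
        · exfalso
          obtain ⟨i, hi, rfl⟩ := Finset.mem_image.mp h'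
          exact hdisj _ (ha _ hq) hi
      · intro hq
        have hq1 : q.1 ∈ s := by
          obtain ⟨i, hi, rfl⟩ := Finset.mem_image.mp hq; exact hi
        have : q ∈ a1 ∪ b1 := by
          rw [h]; exact Finset.mem_union_left _ hq
        rcases Finset.mem_union.mp this with h' | h'
        · exact h'
        · exact absurd (hb q h') (fun h2 => hdisj q hq1 h2)
    · ext q
      constructor
      · intro hq
        have : q ∈ a1 ∪ b1 := Finset.mem_union_right _ hq
        rw [h, Finset.mem_union] at this
        rcases this with h' | h'
        · exfalso
          obtain ⟨i, hi, rfl⟩ := Finset.mem_image.mp h'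
          exact hdisj _ hi (hb _ hq)
        · exact h'
      · intro hq
        have hq1 : q.1 ∈ t := by
          obtain ⟨i, hi, rfl⟩ := Finset.mem_image.mp hq; exact hi
        have : q ∈ a1 ∪ b1 := by
          rw [h]; exact Finset.mem_union_right _ hq
        rcases Finset.mem_union.mp this with h' | h'
        · exact absurd (ha q h') (fun h2 => hdisj q h2 hq1)
        · exact h'
  · rintro ⟨rfl, rfl⟩; rfl

lemma main_lemma (x : ι → α) : ∀ (c : AC ι α), c.Decomposable → c.Smooth →
    c.evalAt x =
      (c.subs.map fun p => if p.1 = c.vars.image (fun i => (i, x i)) then p.2 else 0).sum := by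
  intro c
  induction c with
  | ind i v =>
      intro _ _
      simp only [subs, vars, evalAt, eval, inputOf, Finset.image_singleton,
        Multiset.map_singleton, Multiset.sum_singleton]
      by_cases h : x i = v
      · subst h; simp
      · simp [h, Ne.symm h]
  | param θ =>
      intro _ _
      simp [subs, vars, evalAt, eval]
  | sum l r ihl ihr =>
      rintro ⟨hdl, hdr⟩ ⟨hv, hsl, hsr⟩
      have hvars : (AC.sum l r).vars = l.vars := by
        simp [vars, hv]
      rw [show (AC.sum l r).vars = l.vars from hvars]
      simp only [subs, Multiset.map_add, Multiset.sum_add]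
      rw [show evalAt x (l.sum r) = evalAt x l + evalAt x r from rfl,
        ihl hdl hsl, ihr hdr hsr, hv]
  | prod l r ihl ihr =>
      rintro ⟨hdisj, hdl, hdr⟩ ⟨hsl, hsr⟩
      simp only [subs, evalAt, eval, Multiset.map_bind, Multiset.sum_bind, Multiset.map_map]
      rw [show (AC.prod l r).vars = l.vars ∪ r.vars from rfl, Finset.image_union]
      have key : ∀ a ∈ l.subs,
          ((r.subs.map fun b =>
            if a.1 ∪ b.1 = l.vars.image (fun i => (i, x i)) ∪ r.vars.image (fun i => (i, x i))
            then a.2 * b.2 else 0)).sum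
          = (if a.1 = l.vars.image (fun i => (i, x i)) then a.2 else 0) *
            (r.subs.map fun b => if b.1 = r.vars.image (fun i => (i, x i)) then b.2 else 0).sum := by
        intro a ha
        rw [← Multiset.sum_map_mul_left]
        apply congrArg
        apply Multiset.map_congr rfl
        intro b hb
        rw [if_congr (union_eq_iff x l.vars r.vars hdisj a.1 b.1
          (fst_mem_vars l a ha) (fst_mem_vars r b hb)) rfl rfl]
        by_cases h1 : a.1 = l.vars.image (fun i => (i, x i)) <;>
          by_cases h2 : b.1 = r.vars.image (fun i => (i, x i)) <;>
          simp [h1, h2]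
      calc l.eval (inputOf x) * r.eval (inputOf x)
          = ((l.subs.map fun a => if a.1 = l.vars.image (fun i => (i, x i)) then a.2 else 0).sum) *
            ((r.subs.map fun b => if b.1 = r.vars.image (fun i => (i, x i)) then b.2 else 0).sum) := by
            rw [← ihl hdl hsl, ← ihr hdr hsr]; rfl
        _ = (l.subs.map fun a =>
              (if a.1 = l.vars.image (fun i => (i, x i)) then a.2 else 0) *
              (r.subs.map fun b => if b.1 = r.vars.image (fun i => (i, x i)) then b.2 else 0).sum).sum := by
            rw [Multiset.sum_map_mul_right]
        _ = _ := by
            rw [← Multiset.map_congr rfl key]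
            rfl

end AC


/-- In a decomposable and smooth circuit `AC(X)`, the value at any full
instantiation `x` equals the sum of the coefficients of all `x`-subcircuits. -/
theorem stmt2 {ι α : Type} [Fintype ι] [DecidableEq ι] [Fintype α] [DecidableEq α]
    (c : AC ι α) (hd : c.Decomposable) (hs : c.Smooth) (hv : c.vars = Finset.univ)
    (x : ι → α) :
    c.evalAt x = (c.subs.map fun p => if p.1 = AC.graphOf x then p.2 else 0).sum := by
  have := AC.main_lemma x c hd hs
  rw [this, hv]
  rfl
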